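/- arXiv:1705.07268 — 2 statements merged into one kernel-verified Lean document; each statement's English description precedes it below -/
import Mathlib

section
/- The symmetric bilinear form B(X,Y) = tr(X·Y), restricted to the subspace t = {X ∈ sp_{2n}(𝔽) : X·β = β·X} of sp_{2n}(𝔽), is non-degenerate. -/
open Matrix

/-- The matrix `J = [[0, I'ₙ],[−I'ₙ, 0]]` where `I'ₙ` is the antidiagonal identity. -/
def Jmat (R : Type*) [CommRing R] (n : ℕ) : Matrix (Fin (2*n)) (Fin (2*n)) R :=
  Matrix.of fun i j =>
    if (i : ℕ) + (j : ℕ) = 2*n - 1 then (if (i : ℕ) < n then (1 : R) else -1) else 0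

/-- The symplectic group `Sp_{2n}(R)` as a set of matrices. -/
def SpSet (n : ℕ) (R : Type*) [CommRing R] : Set (Matrix (Fin (2*n)) (Fin (2*n)) R) :=
  {g | IsUnit g.det ∧ g * Jmat R n * gᵀ = Jmat R n}

/-- The symplectic Lie algebra `sp_{2n}(R)` as a set of matrices. -/
def spSet (n : ℕ) (R : Type*) [CommRing R] : Set (Matrix (Fin (2*n)) (Fin (2*n)) R) :=
  {X | X * Jmat R n + Jmat R n * Xᵀ = 0}

/-! ### Auxiliary results on the centralizer of a matrix with irreducible characteristic
polynomial -/

open Polynomial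

section Centralizer

variable {𝔽 : Type*} [Field 𝔽] {m : ℕ} (β : Matrix (Fin m) (Fin m) 𝔽)

/-- The algebra map from `𝔽[t]/(charpoly β)` to matrices, sending the root to `β`. -/
noncomputable def phiAux : AdjoinRoot (Matrix.charpoly β) →ₐ[𝔽] Matrix (Fin m) (Fin m) 𝔽 :=
  Ideal.Quotient.liftₐ _ (Polynomial.aeval β) (by
    intro a ha
    rw [Ideal.mem_span_singleton] at ha
    obtain ⟨b, rfl⟩ := ha
    rw [_root_.map_mul, Matrix.aeval_self_charpoly, zero_mul])

theorem phiAux_mk (q : 𝔽[X]) : phiAux β (AdjoinRoot.mk _ q) = aeval β q := by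
  rfl

theorem phiAux_comm {X : Matrix (Fin m) (Fin m) 𝔽} (hc : X * β = β * X)
    (k : AdjoinRoot (Matrix.charpoly β)) : X * phiAux β k = phiAux β k * X := by
  obtain ⟨q, rfl⟩ := AdjoinRoot.mk_surjective k
  rw [phiAux_mk]
  induction q using Polynomial.induction_on' with
  | add p q hp hq => rw [map_add, mul_add, add_mul, hp, hq]
  | monomial i a =>
    rw [aeval_monomial]
    exact (((Algebra.commute_algebraMap_left a X).symm.mul_right
      (Commute.pow_right (hc : Commute X β) i))).eq

set_option maxHeartbeats 1000000 in
/-- If `β` has irreducible characteristic polynomial over a finite field, `X` commutes with `β`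
and `tr (p(β) · X²) = 0` for every polynomial `p`, then `X = 0`. -/
theorem aux_main [Finite 𝔽] (hm : m ≠ 0) (hirr : Irreducible (Matrix.charpoly β))
    {X : Matrix (Fin m) (Fin m) 𝔽} (hcomm : X * β = β * X)
    (htr : ∀ q : 𝔽[X], (aeval β q * (X * X)).trace = 0) : X = 0 := by
  haveI : Fact (Irreducible (Matrix.charpoly β)) := ⟨hirr⟩
  letI : Module (AdjoinRoot (Matrix.charpoly β)) (Fin m → 𝔽) := Module.compHom _
    ((Matrix.toLinAlgEquiv' :
        Matrix (Fin m) (Fin m) 𝔽 ≃ₐ[𝔽] _).toAlgHom.comp (phiAux β)).toRingHom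
  set K := AdjoinRoot (Matrix.charpoly β) with hKdef
  have hsmul : ∀ (k : K) (v : Fin m → 𝔽), k • v = (phiAux β k).mulVec v := fun k v => rfl
  letI : IsScalarTower 𝔽 K (Fin m → 𝔽) := ⟨fun a k v => by
    rw [hsmul, hsmul, _root_.map_smul, Matrix.smul_mulVec]⟩
  letI : Module.Finite K (Fin m → 𝔽) := Module.Finite.of_restrictScalars_finite 𝔽 K _
  haveI : FiniteDimensional 𝔽 K := (AdjoinRoot.powerBasis hirr.ne_zero).finite
  have hfK : Module.finrank 𝔽 K = m := by
    rw [(AdjoinRoot.powerBasis hirr.ne_zero).finrank]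
    show (Matrix.charpoly β).natDegree = m
    simp [Matrix.charpoly_natDegree_eq_dim]
  have hfKV : Module.finrank K (Fin m → 𝔽) = 1 := by
    have h2 := Module.finrank_mul_finrank 𝔽 K (Fin m → 𝔽)
    rw [hfK, Module.finrank_pi, Fintype.card_fin] at h2
    exact Nat.eq_of_mul_eq_mul_left (Nat.pos_of_ne_zero hm) (h2.trans (Nat.mul_one m).symm)
  obtain ⟨e⟩ := FiniteDimensional.nonempty_linearEquiv_of_finrank_eq
    (R := K) (M := Fin m → 𝔽) (M' := K) (by rw [hfKV, Module.finrank_self])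
  have hXk : ∀ k : K, X * phiAux β k = phiAux β k * X := phiAux_comm β hcomm
  let g : (Fin m → 𝔽) →ₗ[K] (Fin m → 𝔽) :=
    { toFun := fun v => X.mulVec v
      map_add' := fun u v => X.mulVec_add u v
      map_smul' := fun k v => by
        simp only [RingHom.id_apply, hsmul, Matrix.mulVec_mulVec, ← hXk] }
  set w : Fin m → 𝔽 := e.symm 1 with hw
  set c : K := e (g w) with hcdef
  have hgw : g w = c • w := by
    rw [hcdef, hw, ← _root_.map_smul e.symm, smul_eq_mul, mul_one,
      LinearEquiv.symm_apply_apply]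
  have key : ∀ v, X.mulVec v = c • v := by
    intro v
    have hv : v = (e v) • w := by
      rw [hw, ← _root_.map_smul e.symm, smul_eq_mul, mul_one, LinearEquiv.symm_apply_apply]
    calc X.mulVec v = g v := rfl
      _ = g ((e v) • w) := by rw [← hv]
      _ = (e v) • g w := _root_.map_smul g _ _
      _ = (e v) • (c • w) := by rw [hgw]
      _ = c • ((e v) • w) := by rw [smul_smul, smul_smul, mul_comm]
      _ = c • v := by rw [← hv]
  have hX : X = phiAux β c := by
    apply Matrix.toLin'.injective
    apply LinearMap.ext
    intro v
    rw [Matrix.toLin'_apply, Matrix.toLin'_apply, key, hsmul]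
  have htrace : ∀ a : K, Matrix.trace (phiAux β a) = Algebra.trace 𝔽 K a := by
    intro a
    have h1 : Matrix.trace (phiAux β a)
        = LinearMap.trace 𝔽 (Fin m → 𝔽) (Matrix.toLin' (phiAux β a)) := by
      rw [LinearMap.trace_eq_matrix_trace 𝔽 (Pi.basisFun 𝔽 (Fin m)),
        LinearMap.toMatrix_eq_toMatrix', LinearMap.toMatrix'_toLin']
    let e' : (Fin m → 𝔽) ≃ₗ[𝔽] K := e.restrictScalars 𝔽
    have h2 : e'.conj (Matrix.toLin' (phiAux β a)) = Algebra.lmul 𝔽 K a := by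
      apply LinearMap.ext
      intro x
      rw [LinearEquiv.conj_apply]
      show e ((Matrix.toLin' (phiAux β a)) (e.symm x)) = a * x
      rw [Matrix.toLin'_apply, ← hsmul, _root_.map_smul, LinearEquiv.apply_symm_apply,
        smul_eq_mul]
    rw [h1, ← LinearMap.trace_conj' (Matrix.toLin' (phiAux β a)) e', h2, Algebra.trace_apply]
  have hzero : c * c = 0 := by
    apply (traceForm_nondegenerate 𝔽 K).1
    intro k
    rw [Algebra.traceForm_apply, ← htrace]
    obtain ⟨q, hq⟩ := AdjoinRoot.mk_surjective k
    rw [_root_.map_mul, _root_.map_mul, ← hX, ← hq, phiAux_mk, Matrix.trace_mul_comm]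
    exact htr q
  rw [hX, mul_self_eq_zero.mp hzero, map_zero]

end Centralizer

/-! ### Symplectic auxiliary lemmas -/

theorem Jmat_mul_Jmat (R : Type*) [CommRing R] (n : ℕ) : Jmat R n * Jmat R n = -1 := by
  ext i j
  have hi := i.is_lt
  have hj := j.is_lt
  rw [Matrix.mul_apply, Matrix.neg_apply, Matrix.one_apply]
  rw [Finset.sum_eq_single (⟨2*n - 1 - (i:ℕ), by omega⟩ : Fin (2*n))]
  · simp only [Jmat, Matrix.of_apply]
    rw [if_pos (show (i:ℕ) + (2*n-1-(i:ℕ)) = 2*n-1 by omega)]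
    by_cases hij : i = j
    · subst hij
      rw [if_pos (show (2*n-1-(i:ℕ)) + (i:ℕ) = 2*n-1 by omega), if_pos rfl]
      by_cases hin : (i:ℕ) < n
      · rw [if_pos hin, if_neg (show ¬(2*n-1-(i:ℕ) < n) by omega)]; ring
      · rw [if_neg hin, if_pos (show 2*n-1-(i:ℕ) < n by omega)]; ring
    · have hne : ¬((2*n-1-(i:ℕ)) + (j:ℕ) = 2*n-1) := fun h => hij (Fin.val_injective (by omega))
      rw [if_neg hne, mul_zero, if_neg hij, neg_zero]
  · intro b _ hbne
    simp only [Jmat, Matrix.of_apply]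
    rw [if_neg (fun h => hbne (Fin.val_injective (show (b:ℕ) = 2*n-1-(i:ℕ) by omega))), zero_mul]
  · intro h; exact absurd (Finset.mem_univ _) h

theorem trace_eq_zero_of_mem_sp {n : ℕ} {𝔽 : Type*} [Field 𝔽] (hchar : ringChar 𝔽 ≠ 2)
    {Z : Matrix (Fin (2*n)) (Fin (2*n)) 𝔽} (hZ : Z ∈ spSet n 𝔽) : Z.trace = 0 := by
  have h1 : Z * Jmat 𝔽 n = -(Jmat 𝔽 n * Zᵀ) := eq_neg_of_add_eq_zero_left hZ
  have h2 : Z = Jmat 𝔽 n * Zᵀ * Jmat 𝔽 n := by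
    have h := congrArg (fun M => M * Jmat 𝔽 n) h1
    simp only [neg_mul] at h
    rw [mul_assoc, Jmat_mul_Jmat, mul_neg_one] at h
    exact neg_injective h
  have h3 : Z.trace = - Z.trace := by
    conv_lhs => rw [h2]
    rw [Matrix.trace_mul_comm, ← mul_assoc, Jmat_mul_Jmat, neg_one_mul, Matrix.trace_neg,
      Matrix.trace_transpose]
  have h4 : Z.trace + Z.trace = 0 := by nth_rewrite 2 [h3]; rw [add_neg_cancel]
  rw [← two_mul] at h4
  exact (mul_eq_zero.mp h4).resolve_left (Ring.two_ne_zero hchar)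

theorem sigma_mul {n : ℕ} {𝔽 : Type*} [Field 𝔽]
    {A B : Matrix (Fin (2*n)) (Fin (2*n)) 𝔽} {a b : 𝔽}
    (ha : A * Jmat 𝔽 n = a • (Jmat 𝔽 n * Aᵀ)) (hb : B * Jmat 𝔽 n = b • (Jmat 𝔽 n * Bᵀ))
    (hab : Aᵀ * Bᵀ = Bᵀ * Aᵀ) :
    (A * B) * Jmat 𝔽 n = (a*b) • (Jmat 𝔽 n * (A*B)ᵀ) := by
  rw [mul_assoc, hb, Matrix.mul_smul, ← mul_assoc, ha, Matrix.smul_mul, smul_smul,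
    Matrix.transpose_mul, mul_comm b a, mul_assoc (Jmat 𝔽 n), hab, ← mul_assoc]

/-- The trace form `B(X,Y) = tr(XY)` restricted to the centralizer of `β` in
`sp_{2n}(𝔽)` is non-degenerate. -/
theorem stmt5 (n : ℕ) (hn : 1 ≤ n) (𝔽 : Type*) [Field 𝔽] [Finite 𝔽]
    (hchar : ringChar 𝔽 ≠ 2)
    (β : Matrix (Fin (2*n)) (Fin (2*n)) 𝔽) (hβ : β ∈ spSet n 𝔽)
    (hirr : Irreducible β.charpoly) :
    ∀ X, X ∈ spSet n 𝔽 → X * β = β * X →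
      (∀ Y, Y ∈ spSet n 𝔽 → Y * β = β * Y → (X * Y).trace = 0) → X = 0 := by
  intro X hX hXβ H
  have hm : 2*n ≠ 0 := by omega
  have hβJ : β * Jmat 𝔽 n = (-1 : 𝔽) • (Jmat 𝔽 n * βᵀ) := by
    rw [eq_neg_of_add_eq_zero_left hβ, neg_smul, one_smul]
  have hXJ : X * Jmat 𝔽 n = (-1 : 𝔽) • (Jmat 𝔽 n * Xᵀ) := by
    rw [eq_neg_of_add_eq_zero_left hX, neg_smul, one_smul]
  have hTc : Commute Xᵀ βᵀ := by
    have := congrArg Matrix.transpose hXβ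
    rw [Matrix.transpose_mul, Matrix.transpose_mul] at this
    exact this.symm
  have hpow : ∀ k : ℕ, β^k * Jmat 𝔽 n = ((-1:𝔽)^k) • (Jmat 𝔽 n * (β^k)ᵀ) := by
    intro k
    induction k with
    | zero => simp
    | succ k ih =>
      rw [pow_succ, pow_succ]
      exact sigma_mul ih hβJ (by
        rw [Matrix.transpose_pow]
        exact ((Commute.refl βᵀ).pow_left k).eq)
  have hXcp : ∀ k : ℕ, X * β^k = β^k * X := fun k =>
    (Commute.pow_right (hXβ : Commute X β) k).eq
  have heven : ∀ k : ℕ, Even k → (β^k * (X*X)).trace = 0 := by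
    intro k hk
    have hab : (β^k)ᵀ * Xᵀ = Xᵀ * (β^k)ᵀ := by
      rw [Matrix.transpose_pow]
      exact ((hTc.symm.pow_left k)).eq
    have hY := sigma_mul (hpow k) hXJ hab
    rw [hk.neg_one_pow, one_mul] at hY
    have hmem : β^k * X ∈ spSet n 𝔽 := by
      show (β^k*X) * Jmat 𝔽 n + Jmat 𝔽 n * (β^k*X)ᵀ = 0
      rw [hY, neg_smul, one_smul, neg_add_cancel]
    have hYcomm : (β^k * X) * β = β * (β^k * X) := by
      rw [mul_assoc, hXβ, ← mul_assoc, ← pow_succ, pow_succ', mul_assoc]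
    have h0 := H _ hmem hYcomm
    rw [show β^k*(X*X) = X*(β^k*X) by simp only [← mul_assoc]; rw [hXcp k]]
    exact h0
  have hodd : ∀ k : ℕ, Odd k → (β^k * (X*X)).trace = 0 := by
    intro k hk
    apply trace_eq_zero_of_mem_sp hchar
    have hXX := sigma_mul hXJ hXJ rfl
    have hab : (β^k)ᵀ * (X*X)ᵀ = (X*X)ᵀ * (β^k)ᵀ := by
      rw [Matrix.transpose_pow, Matrix.transpose_mul]
      exact (((hTc.symm.pow_left k)).mul_right ((hTc.symm.pow_left k))).eq
    have hZ := sigma_mul (hpow k) hXX hab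
    rw [show ((-1:𝔽)^k * ((-1)*(-1))) = -1 by rw [hk.neg_one_pow]; ring] at hZ
    show (β^k*(X*X)) * Jmat 𝔽 n + Jmat 𝔽 n * (β^k*(X*X))ᵀ = 0
    rw [hZ, neg_smul, one_smul, neg_add_cancel]
  have hall : ∀ q : Polynomial 𝔽, (Polynomial.aeval β q * (X*X)).trace = 0 := by
    intro q
    induction q using Polynomial.induction_on' with
    | add p q hp hq => rw [map_add, add_mul, Matrix.trace_add, hp, hq, add_zero]
    | monomial i a =>
      rw [Polynomial.aeval_monomial, Algebra.algebraMap_eq_smul_one, Matrix.smul_mul,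
        Matrix.smul_mul, one_mul, Matrix.trace_smul]
      rcases Nat.even_or_odd i with h | h
      · rw [heven i h, smul_zero]
      · rw [hodd i h, smul_zero]
  exact aux_main β hm hirr hXβ hall
end

section
/- For all integers r ≥ s ≥ 1, the kernel of the reduction homomorphism Sp_{2n}(O/ϖ^r O) → Sp_{2n}(O/ϖ^s O) has cardinality q^{n(2n+1)(r−s)}. -/
open Matrix

set_option linter.unusedSectionVars false
set_option linter.unusedVariables false
set_option maxHeartbeats 1000000

section Jlemmas
variable {R S : Type*} [CommRing R] [CommRing S] {n : ℕ}

lemma Jmat_transpose : (Jmat R n)ᵀ = - Jmat R n := by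
  ext i j
  have hi := i.isLt
  have hj := j.isLt
  simp only [transpose_apply, Jmat, of_apply, Matrix.neg_apply]
  split_ifs <;> first | (exfalso; omega) | ring

lemma Jmat_mul_self : Jmat R n * Jmat R n = -1 := by
  ext i j
  have hi := i.isLt
  have hj := j.isLt
  have h2n : 0 < 2*n := by omega
  set i' : Fin (2*n) := ⟨2*n - 1 - (i : ℕ), by omega⟩ with hi'
  rw [mul_apply, Finset.sum_eq_single i']
  · have hv : (i' : ℕ) = 2*n - 1 - (i : ℕ) := rfl
    simp only [Jmat, of_apply, Matrix.neg_apply, one_apply, hv, Fin.ext_iff]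
    split_ifs <;> first | (exfalso; omega) | ring
  · intro k _ hk
    have hkv : (k : ℕ) ≠ 2*n - 1 - (i : ℕ) := by
      intro hcon; exact hk (Fin.ext (by simp [hi']; omega))
    simp only [Jmat, of_apply]
    rw [if_neg (by omega), zero_mul]
  · intro h; exact absurd (Finset.mem_univ i') h

lemma Jmat_map (f : R →+* S) : (Jmat R n).map f = Jmat S n := by
  ext i j
  simp only [map_apply, Jmat, of_apply]
  split_ifs
  · exact f.map_one
  · rw [map_neg, f.map_one]
  · exact f.map_zero

end Jlemmas


-- counting helper
lemma sum_ite_le (m iv : ℕ) : (∑ j ∈ Finset.range m, if iv ≤ j then 1 else 0) = m - iv := by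
  induction m with
  | zero => simp
  | succ m ih =>
    rw [Finset.sum_range_succ, ih]
    by_cases h : iv ≤ m
    · rw [if_pos h]; omega
    · rw [if_neg h]; omega

lemma card_le_pairs (m : ℕ) :
    Nat.card {p : Fin m × Fin m // p.1 ≤ p.2} * 2 = m * (m + 1) := by
  rw [Nat.card_eq_fintype_card, Fintype.card_subtype]
  have h1 : (Finset.univ.filter fun p : Fin m × Fin m => p.1 ≤ p.2).card
      = ∑ p : Fin m × Fin m, if p.1 ≤ p.2 then 1 else 0 := by
    rw [Finset.card_filter]
  rw [h1, Fintype.sum_prod_type]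
  have h2 : ∀ i : Fin m, (∑ j : Fin m, if i ≤ j then (1:ℕ) else 0) = m - (i : ℕ) := by
    intro i
    have : (∑ j : Fin m, if i ≤ j then (1:ℕ) else 0)
        = ∑ j ∈ Finset.range m, if (i : ℕ) ≤ j then 1 else 0 := by
      simp only [Fin.le_def]
      exact Fin.sum_univ_eq_sum_range (fun j => if (i:ℕ) ≤ j then (1:ℕ) else 0) m
    rw [this, sum_ite_le]
  simp_rw [h2]
  have h3 : (∑ i : Fin m, (m - (i : ℕ))) = ∑ i ∈ Finset.range m, (m - i) :=
    Fin.sum_univ_eq_sum_range (fun i => m - i) m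
  rw [h3]
  have h4 : (∑ i ∈ Finset.range m, (m - i)) = ∑ i ∈ Finset.range m, (i + 1) := by
    rw [← Finset.sum_range_reflect]
    apply Finset.sum_congr rfl
    intro x hx
    rw [Finset.mem_range] at hx
    omega
  rw [h4, Finset.sum_add_distrib, Finset.sum_const, Finset.card_range, smul_eq_mul, mul_one,
    add_mul, Finset.sum_range_id_mul_two]
  cases m with
  | zero => simp
  | succ k => simp only [Nat.succ_sub_one]; ring


/-- Symmetric matrices are parametrized by entries on or above the diagonal. -/
def symmEquiv (F : Type*) (m : ℕ) :
    {A : Matrix (Fin m) (Fin m) F // Aᵀ = A} ≃ ({p : Fin m × Fin m // p.1 ≤ p.2} → F) where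
  toFun A p := A.1 p.1.1 p.1.2
  invFun f := ⟨Matrix.of fun i j =>
      if h : i ≤ j then f ⟨(i,j), h⟩ else f ⟨(j,i), le_of_not_ge h⟩, by
    ext i j
    simp only [transpose_apply, of_apply]
    split_ifs with h1 h2 h2
    · have : j = i := le_antisymm h1 h2
      subst this; rfl
    · rfl
    · rfl
    · exact absurd (le_of_not_ge h1) h2⟩
  left_inv A := by
    apply Subtype.ext
    ext i j
    simp only [of_apply]
    split_ifs with h
    · rfl
    · exact congrFun (congrFun A.2 i) j
  right_inv f := by
    funext p
    obtain ⟨⟨i, j⟩, h⟩ := p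
    simp only [of_apply]
    rw [dif_pos h]

lemma card_symm (F : Type*) [Finite F] (m : ℕ) :
    Nat.card {A : Matrix (Fin m) (Fin m) F // Aᵀ = A}
      = Nat.card F ^ Nat.card {p : Fin m × Fin m // p.1 ≤ p.2} := by
  rw [Nat.card_congr (symmEquiv F m), Nat.card_fun]

/-- `sp` is in bijection with symmetric matrices via `X ↦ X * J`. -/
def spEquiv (R : Type*) [CommRing R] (n : ℕ) :
    ↥(spSet n R) ≃ {A : Matrix (Fin (2*n)) (Fin (2*n)) R // Aᵀ = A} where
  toFun X := ⟨X.1 * Jmat R n, by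
    have hX : X.1 * Jmat R n + Jmat R n * X.1ᵀ = 0 := X.2
    have h2 : Jmat R n * X.1ᵀ = -(X.1 * Jmat R n) := eq_neg_of_add_eq_zero_right hX
    rw [transpose_mul, Jmat_transpose, neg_mul, h2, neg_neg]⟩
  invFun A := ⟨-(A.1 * Jmat R n), by
    show -(A.1 * Jmat R n) * Jmat R n + Jmat R n * (-(A.1 * Jmat R n))ᵀ = 0
    rw [transpose_neg, transpose_mul, Jmat_transpose, A.2, mul_neg, neg_mul, neg_mul, mul_neg,
      neg_neg, mul_assoc A.1, Jmat_mul_self, ← mul_assoc (Jmat R n) (Jmat R n), Jmat_mul_self,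
      mul_neg_one, neg_neg, neg_one_mul, add_neg_cancel]⟩
  left_inv X := by
    apply Subtype.ext
    show -(X.1 * Jmat R n * Jmat R n) = X.1
    rw [mul_assoc, Jmat_mul_self, mul_neg_one, neg_neg]
  right_inv A := by
    apply Subtype.ext
    show -(A.1 * Jmat R n) * Jmat R n = A.1
    rw [neg_mul, mul_assoc, Jmat_mul_self, mul_neg_one, neg_neg]

lemma card_spSet (F : Type*) [CommRing F] [Finite F] (n : ℕ) :
    Nat.card ↥(spSet n F) = Nat.card F ^ (n * (2*n + 1)) := by
  rw [Nat.card_congr (spEquiv F n), card_symm]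
  congr 1
  have h := card_le_pairs (2*n)
  have h2 : 2*n*(2*n+1) = 2*(n*(2*n+1)) := by ring
  omega


section Ring
variable {O : Type*} [CommRing O] [IsDomain O] [IsDiscreteValuationRing O] (ϖ : O) (r : ℕ)

/-- The additive map `O/ϖ → O/ϖ^{r+1}` sending `x mod ϖ` to `ϖ^r x mod ϖ^{r+1}`. -/
noncomputable def phi : (O ⧸ Ideal.span {ϖ}) →ₗ[O] O ⧸ Ideal.span {ϖ^(r+1)} :=
  Submodule.liftQ (Ideal.span {ϖ}) ((ϖ^r) • (Algebra.linearMap O (O ⧸ Ideal.span {ϖ^(r+1)})))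
    (by
      intro x hx
      rw [Ideal.mem_span_singleton] at hx
      obtain ⟨c, rfl⟩ := hx
      simp only [LinearMap.mem_ker, LinearMap.smul_apply, Algebra.linearMap_apply]
      rw [Ideal.Quotient.algebraMap_eq, Algebra.smul_def, Ideal.Quotient.algebraMap_eq,
        ← _root_.map_mul, Ideal.Quotient.eq_zero_iff_mem, Ideal.mem_span_singleton]
      exact ⟨c, by ring⟩)

lemma phi_mk (x : O) :
    phi ϖ r (Ideal.Quotient.mk _ x) = Ideal.Quotient.mk _ (ϖ^r * x) := by
  show phi ϖ r (Submodule.Quotient.mk x) = _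
  rw [phi, Submodule.liftQ_apply]
  simp only [LinearMap.smul_apply, Algebra.linearMap_apply, Ideal.Quotient.algebraMap_eq]
  rw [Algebra.smul_def, Ideal.Quotient.algebraMap_eq, ← _root_.map_mul]

lemma phi_injective (hϖ : Irreducible ϖ) : Function.Injective (phi ϖ r) := by
  rw [← LinearMap.ker_eq_bot]
  rw [Submodule.eq_bot_iff]
  intro x hx
  obtain ⟨y, rfl⟩ := Ideal.Quotient.mk_surjective x
  rw [LinearMap.mem_ker, phi_mk, Ideal.Quotient.eq_zero_iff_mem, Ideal.mem_span_singleton] at hx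
  obtain ⟨c, hc⟩ := hx
  have hϖr : (ϖ^r : O) ≠ 0 := pow_ne_zero _ hϖ.ne_zero
  have : y = ϖ * c := by
    have h2 : ϖ^r * y = ϖ^r * (ϖ * c) := by rw [hc]; ring
    exact mul_left_cancel₀ hϖr h2
  rw [Ideal.Quotient.eq_zero_iff_mem, Ideal.mem_span_singleton]
  exact ⟨c, this⟩

lemma pow_le_pow_span {s t : ℕ} (h : s ≤ t) :
    Ideal.span {ϖ^t} ≤ Ideal.span {ϖ^s} :=
  Ideal.span_singleton_le_span_singleton.mpr (pow_dvd_pow ϖ h)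

/-- The reduction map `O/ϖ^{r+1} → O/ϖ^r`. -/
noncomputable def redmap : (O ⧸ Ideal.span {ϖ^(r+1)}) →+* O ⧸ Ideal.span {ϖ^r} :=
  Ideal.Quotient.factor (pow_le_pow_span ϖ (Nat.le_succ r))

lemma redmap_surjective : Function.Surjective (redmap ϖ r) := by
  intro y
  obtain ⟨x, rfl⟩ := Ideal.Quotient.mk_surjective y
  exact ⟨Ideal.Quotient.mk _ x, Ideal.Quotient.factor_mk _ x⟩

lemma redmap_phi (x : O ⧸ Ideal.span {ϖ}) : redmap ϖ r (phi ϖ r x) = 0 := by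
  obtain ⟨y, rfl⟩ := Ideal.Quotient.mk_surjective x
  rw [phi_mk, redmap, Ideal.Quotient.factor_mk, Ideal.Quotient.eq_zero_iff_mem,
    Ideal.mem_span_singleton]
  exact ⟨y, rfl⟩

lemma exists_phi_of_redmap_eq_zero {y : O ⧸ Ideal.span {ϖ^(r+1)}} (hy : redmap ϖ r y = 0) :
    ∃ x, phi ϖ r x = y := by
  obtain ⟨a, rfl⟩ := Ideal.Quotient.mk_surjective y
  rw [redmap, Ideal.Quotient.factor_mk, Ideal.Quotient.eq_zero_iff_mem,
    Ideal.mem_span_singleton] at hy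
  obtain ⟨b, rfl⟩ := hy
  exact ⟨Ideal.Quotient.mk _ b, phi_mk ϖ r b⟩

lemma phi_mul_phi (hr : 1 ≤ r) (x y : O ⧸ Ideal.span {ϖ}) :
    phi ϖ r x * phi ϖ r y = 0 := by
  obtain ⟨a, rfl⟩ := Ideal.Quotient.mk_surjective x
  obtain ⟨b, rfl⟩ := Ideal.Quotient.mk_surjective y
  rw [phi_mk, phi_mk, ← _root_.map_mul, Ideal.Quotient.eq_zero_iff_mem, Ideal.mem_span_singleton]
  refine ⟨ϖ^(r-1) * (a*b), ?_⟩
  have hpow : ϖ^r * ϖ^r = ϖ^(r+1) * ϖ^(r-1) := by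
    rw [← pow_add, ← pow_add]; congr 1; omega
  linear_combination (a * b) * hpow

lemma isUnit_of_redmap_isUnit (hr : 1 ≤ r) {y : O ⧸ Ideal.span {ϖ^(r+1)}}
    (hy : IsUnit (redmap ϖ r y)) : IsUnit y := by
  obtain ⟨u, hu⟩ := hy
  obtain ⟨z, hz⟩ := redmap_surjective ϖ r (↑u⁻¹ : O ⧸ Ideal.span {ϖ^r})
  have h1 : redmap ϖ r (y * z) = 1 := by
    rw [_root_.map_mul, ← hu, hz]
    exact u.mul_inv
  have h2 : redmap ϖ r (y * z - 1) = 0 := by rw [_root_.map_sub, h1, _root_.map_one, sub_self]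
  obtain ⟨t, ht⟩ := exists_phi_of_redmap_eq_zero ϖ r h2
  have h3 : y * z = 1 + phi ϖ r t := by rw [ht]; ring
  have h5 := phi_mul_phi ϖ r hr t t
  have h4 : y * z * (1 - phi ϖ r t) = 1 := by
    rw [h3]; ring_nf; rw [sq, h5, sub_zero]
  exact IsUnit.of_mul_eq_one (z * (1 - phi ϖ r t)) (by rw [← mul_assoc]; exact h4)

end Ring

section MatrixPhi
variable {O : Type*} [CommRing O] [IsDomain O] [IsDiscreteValuationRing O] (ϖ : O) (r : ℕ)

lemma phi_mul_J {n : ℕ} (x : O ⧸ Ideal.span {ϖ}) (k j : Fin (2*n)) :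
    phi ϖ r x * Jmat (O ⧸ Ideal.span {ϖ^(r+1)}) n k j
      = phi ϖ r (x * Jmat (O ⧸ Ideal.span {ϖ}) n k j) := by
  simp only [Jmat, of_apply]
  split_ifs <;> simp

lemma J_mul_phi {n : ℕ} (x : O ⧸ Ideal.span {ϖ}) (k j : Fin (2*n)) :
    Jmat (O ⧸ Ideal.span {ϖ^(r+1)}) n k j * phi ϖ r x
      = phi ϖ r (Jmat (O ⧸ Ideal.span {ϖ}) n k j * x) := by
  simp only [Jmat, of_apply]
  split_ifs <;> simp

variable {m : ℕ}

lemma map_phi_mul_map_phi (hr : 1 ≤ r) (X Y : Matrix (Fin m) (Fin m) (O ⧸ Ideal.span {ϖ})) :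
    (X.map (phi ϖ r)) * (Y.map (phi ϖ r)) = 0 := by
  ext i j
  rw [mul_apply]
  simp only [map_apply, Matrix.zero_apply]
  exact Finset.sum_eq_zero fun k _ => phi_mul_phi ϖ r hr _ _

lemma map_phi_mul_J {n : ℕ} (X : Matrix (Fin (2*n)) (Fin (2*n)) (O ⧸ Ideal.span {ϖ})) :
    (X.map (phi ϖ r)) * Jmat (O ⧸ Ideal.span {ϖ^(r+1)}) n
      = (X * Jmat (O ⧸ Ideal.span {ϖ}) n).map (phi ϖ r) := by
  ext i j
  rw [mul_apply, map_apply, mul_apply, map_sum]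
  exact Finset.sum_congr rfl fun k _ => phi_mul_J ϖ r _ k j

lemma J_mul_map_phi {n : ℕ} (X : Matrix (Fin (2*n)) (Fin (2*n)) (O ⧸ Ideal.span {ϖ})) :
    Jmat (O ⧸ Ideal.span {ϖ^(r+1)}) n * (X.map (phi ϖ r))
      = (Jmat (O ⧸ Ideal.span {ϖ}) n * X).map (phi ϖ r) := by
  ext i j
  rw [mul_apply, map_apply, mul_apply, map_sum]
  exact Finset.sum_congr rfl fun k _ => J_mul_phi ϖ r _ i k

lemma map_phi_add (X Y : Matrix (Fin m) (Fin m) (O ⧸ Ideal.span {ϖ})) :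
    (X + Y).map (phi ϖ r) = X.map (phi ϖ r) + Y.map (phi ϖ r) := by
  ext i j; simp [map_apply]

lemma map_phi_injective (hϖ : Irreducible ϖ) :
    Function.Injective (fun X : Matrix (Fin m) (Fin m) (O ⧸ Ideal.span {ϖ}) =>
      X.map (phi ϖ r)) := by
  intro X Y h
  ext i j
  exact phi_injective ϖ r hϖ (congrFun (congrFun h i) j)

lemma map_redmap_map_phi (X : Matrix (Fin m) (Fin m) (O ⧸ Ideal.span {ϖ})) :
    (X.map (phi ϖ r)).map (redmap ϖ r) = 0 := by
  ext i j; simp [map_apply, redmap_phi]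

lemma exists_map_phi {M : Matrix (Fin m) (Fin m) (O ⧸ Ideal.span {ϖ^(r+1)})}
    (hM : M.map (redmap ϖ r) = 0) :
    ∃ X : Matrix (Fin m) (Fin m) (O ⧸ Ideal.span {ϖ}), X.map (phi ϖ r) = M := by
  have h : ∀ i j, ∃ x, phi ϖ r x = M i j := fun i j =>
    exists_phi_of_redmap_eq_zero ϖ r (congrFun (congrFun hM i) j)
  exact ⟨Matrix.of fun i j => (h i j).choose, by ext i j; exact (h i j).choose_spec⟩

end MatrixPhi

section Core
variable {O : Type*} [CommRing O] [IsDomain O] [IsDiscreteValuationRing O] (ϖ : O)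
  (hϖ : Irreducible ϖ) (r : ℕ) (n : ℕ)

local notation "F" => O ⧸ Ideal.span (Singleton.singleton ϖ)
local notation "R'" => O ⧸ Ideal.span {ϖ^(r+1)}
local notation "Rr" => O ⧸ Ideal.span {ϖ^r}

lemma expand3 {α : Type*} [CommRing α] {k : ℕ} (M J D : Matrix (Fin k) (Fin k) α) :
    (1+M)*(J+D)*(1+Mᵀ) = J + D + (M*J + J*Mᵀ)
      + (M*D + D*Mᵀ + M*J*Mᵀ + M*D*Mᵀ) := by
  noncomm_ring

/-- Key algebraic identity over the residue field. -/
lemma sp_correction (h2 : IsUnit (2 : O ⧸ Ideal.span {ϖ}))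
    {A : Matrix (Fin (2*n)) (Fin (2*n)) F} (hA : Aᵀ = -A) :
    ∃ Y : Matrix (Fin (2*n)) (Fin (2*n)) F,
      Y * Jmat F n + Jmat F n * Yᵀ = -A := by
  obtain ⟨u, hu⟩ := h2
  obtain ⟨t, ht⟩ : ∃ t : F, 2 * t = 1 := ⟨↑u⁻¹, by rw [← hu]; exact u.mul_inv⟩
  refine ⟨t • (A * Jmat F n), ?_⟩
  have h1 : (t • (A * Jmat F n)) * Jmat F n = -(t • A) := by
    rw [smul_mul_assoc, mul_assoc, Jmat_mul_self, mul_neg_one, smul_neg]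
  have h2' : Jmat F n * (t • (A * Jmat F n))ᵀ = -(t • A) := by
    rw [transpose_smul, transpose_mul, Jmat_transpose, hA, neg_mul, mul_neg, neg_neg,
      mul_smul_comm, ← mul_assoc, Jmat_mul_self, neg_one_mul, smul_neg]
  rw [h1, h2', ← neg_add, ← add_smul, ← two_mul, ht, one_smul]

/-- Lifting symplectic matrices along the reduction `O/ϖ^{r+1} → O/ϖ^r`. -/
lemma sp_lift (hϖ : Irreducible ϖ) (hr : 1 ≤ r) (h2 : IsUnit (2 : O ⧸ Ideal.span {ϖ}))
    {g : Matrix (Fin (2*n)) (Fin (2*n)) Rr} (hg : g ∈ SpSet n Rr) :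
    ∃ h ∈ SpSet n R', h.map (redmap ϖ r) = g := by
  classical
  set π := redmap ϖ r
  have hπ : Function.Surjective π := redmap_surjective ϖ r
  set g' : Matrix (Fin (2*n)) (Fin (2*n)) R' :=
    Matrix.of fun i j => Function.surjInv hπ (g i j) with hg'def
  have hg' : g'.map π = g := by
    ext i j; exact Function.surjInv_eq hπ (g i j)
  set D := g' * Jmat R' n * g'ᵀ - Jmat R' n with hD
  have hDred : D.map π = 0 := by
    have : D.map π = g'.map π * (Jmat R' n).map π * (g'.map π)ᵀ - (Jmat R' n).map π := by
      simp [hD, Matrix.map_sub, Matrix.map_mul, Matrix.transpose_map]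
    rw [this, hg', Jmat_map, hg.2, sub_self]
  obtain ⟨A, hA⟩ := exists_map_phi ϖ r hDred
  have hDanti : Dᵀ = -D := by
    rw [hD, transpose_sub, transpose_mul, transpose_mul, transpose_transpose, Jmat_transpose,
    ]
    noncomm_ring
  have hAanti : Aᵀ = -A := by
    apply map_phi_injective ϖ r hϖ
    show Aᵀ.map (phi ϖ r) = (-A).map (phi ϖ r)
    have e1 : Aᵀ.map (phi ϖ r) = (A.map (phi ϖ r))ᵀ := (Matrix.transpose_map).symm
    have e2 : (-A).map (phi ϖ r) = -(A.map (phi ϖ r)) := by ext i j; simp [map_apply]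
    rw [e1, e2, hA]
    exact hDanti
  obtain ⟨Y, hY⟩ := sp_correction ϖ n h2 hAanti
  set M := Y.map (phi ϖ r) with hM
  refine ⟨(1 + M) * g', ⟨?_, ?_⟩, ?_⟩
  · -- det is a unit
    have hdet1 : IsUnit (1 + M : Matrix (Fin (2*n)) (Fin (2*n)) R').det := by
      have : (1 + M) * (1 - M) = 1 := by
        have hMM : M * M = 0 := map_phi_mul_map_phi ϖ r hr Y Y
        have e : (1 + M) * (1 - M) = 1 - M * M := by noncomm_ring
        rw [e, hMM, sub_zero]
      have hd : (1 + M).det * (1 - M).det = 1 := by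
        rw [← Matrix.det_mul, this, Matrix.det_one]
      exact IsUnit.of_mul_eq_one _ hd
    have hdetg : IsUnit (g' : Matrix (Fin (2*n)) (Fin (2*n)) R').det := by
      apply isUnit_of_redmap_isUnit ϖ r hr
      have : π g'.det = g.det := by rw [← hg', RingHom.map_det]; rfl
      rw [this]; exact hg.1
    have := hdet1.mul hdetg
    rwa [← Matrix.det_mul] at this
  · -- symplectic condition
    have hgJ : g' * Jmat R' n * g'ᵀ = Jmat R' n + D := by rw [hD]; noncomm_ring
    have htr : ((1 + M) * g')ᵀ = g'ᵀ * (1 + Mᵀ) := by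
      rw [transpose_mul, transpose_add, transpose_one]
    have hassoc : (1 + M) * g' * Jmat R' n * (g'ᵀ * (1 + Mᵀ))
        = (1 + M) * (g' * Jmat R' n * g'ᵀ) * (1 + Mᵀ) := by noncomm_ring
    rw [htr, hassoc, hgJ, expand3]
    have hMt : Mᵀ = (Yᵀ).map (phi ϖ r) := Matrix.transpose_map
    have eMJ : M * Jmat R' n = (Y * Jmat F n).map (phi ϖ r) := map_phi_mul_J ϖ r Y
    have eJM : Jmat R' n * Mᵀ = (Jmat F n * Yᵀ).map (phi ϖ r) := by
      rw [hMt]; exact J_mul_map_phi ϖ r Yᵀ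
    have eMD : M * D = 0 := by rw [hM, ← hA]; exact map_phi_mul_map_phi ϖ r hr Y A
    have eDM : D * Mᵀ = 0 := by rw [hMt, ← hA]; exact map_phi_mul_map_phi ϖ r hr A Yᵀ
    have eMJM : M * Jmat R' n * Mᵀ = 0 := by
      rw [eMJ, hMt]; exact map_phi_mul_map_phi ϖ r hr _ _
    have ekey : M * Jmat R' n + Jmat R' n * Mᵀ = -D := by
      rw [eMJ, eJM, ← map_phi_add, hY, ← hA]
      ext i j; simp [map_apply]
    rw [eMD, eDM, eMJM, zero_mul, ekey]
    abel
  · -- reduces to g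
    have hMred : M.map (⇑π) = 0 := map_redmap_map_phi ϖ r Y
    have h1 : ((1 + M) * g').map (⇑π) = π.mapMatrix (1 + M) * π.mapMatrix g' := by
      rw [← _root_.map_mul]; rfl
    rw [h1, _root_.map_add, _root_.map_one, RingHom.mapMatrix_apply, RingHom.mapMatrix_apply,
      hMred, add_zero, one_mul, hg']

end Core

section Fiber
variable {O : Type*} [CommRing O] [IsDomain O] [IsDiscreteValuationRing O] (ϖ : O) (r n : ℕ)

local notation "F" => O ⧸ Ideal.span (Singleton.singleton ϖ)
local notation "R'" => O ⧸ Ideal.span {ϖ^(r+1)}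
local notation "Rr" => O ⧸ Ideal.span {ϖ^r}

lemma expand2 {α : Type*} [CommRing α] {k : ℕ} (M J : Matrix (Fin k) (Fin k) α) :
    (1+M)*J*(1+Mᵀ) = J + (M*J + J*Mᵀ) + M*J*Mᵀ := by noncomm_ring

lemma map_phi_zero {m : ℕ} : (0 : Matrix (Fin m) (Fin m) F).map (phi ϖ r) = 0 := by
  ext i j; simp [map_apply]

lemma conj_identity (hr : 1 ≤ r) (X : Matrix (Fin (2*n)) (Fin (2*n)) F) :
    (1 + X.map (phi ϖ r)) * Jmat R' n * (1 + (X.map (phi ϖ r))ᵀ)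
      = Jmat R' n + (X * Jmat F n + Jmat F n * Xᵀ).map (phi ϖ r) := by
  set M := X.map (phi ϖ r) with hM
  have hMt : Mᵀ = (Xᵀ).map (phi ϖ r) := Matrix.transpose_map
  have eMJ : M * Jmat R' n = (X * Jmat F n).map (phi ϖ r) := map_phi_mul_J ϖ r X
  have eJM : Jmat R' n * Mᵀ = (Jmat F n * Xᵀ).map (phi ϖ r) := by
    rw [hMt]; exact J_mul_map_phi ϖ r Xᵀ
  have eMJM : M * Jmat R' n * Mᵀ = 0 := by
    rw [eMJ, hMt]; exact map_phi_mul_map_phi ϖ r hr _ _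
  rw [expand2, eMJM, eMJ, eJM, ← map_phi_add, add_zero]

lemma det_one_add_map_phi (hr : 1 ≤ r) (X : Matrix (Fin (2*n)) (Fin (2*n)) F) :
    IsUnit (1 + X.map (phi ϖ r)).det := by
  set M := X.map (phi ϖ r) with hM
  have hMM : M * M = 0 := map_phi_mul_map_phi ϖ r hr X X
  have e : (1 + M) * (1 - M) = 1 - M * M := by noncomm_ring
  have hd : (1 + M).det * (1 - M).det = 1 := by
    rw [← Matrix.det_mul, e, hMM, sub_zero, Matrix.det_one]
  exact IsUnit.of_mul_eq_one _ hd

lemma fiber_card (hϖ : Irreducible ϖ) (hr : 1 ≤ r) (h2 : IsUnit (2 : O ⧸ Ideal.span {ϖ}))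
    {g : Matrix (Fin (2*n)) (Fin (2*n)) Rr} (hg : g ∈ SpSet n Rr) :
    Nat.card {h : Matrix (Fin (2*n)) (Fin (2*n)) R' //
        h ∈ SpSet n R' ∧ h.map (redmap ϖ r) = g}
      = Nat.card ↥(spSet n (O ⧸ Ideal.span {ϖ})) := by
  classical
  obtain ⟨h₀, hh₀, hh₀red⟩ := sp_lift ϖ r n hϖ hr h2 hg
  set π := redmap ϖ r
  have hdeth₀ : IsUnit h₀.det := hh₀.1
  -- the parametrization of the fiber by `sp(F)`
  have main : ∀ X : Matrix (Fin (2*n)) (Fin (2*n)) F,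
      ((1 + X.map (phi ϖ r)) * h₀).map ⇑π = g := by
    intro X
    have hMred : (X.map (phi ϖ r)).map (⇑π) = 0 := map_redmap_map_phi ϖ r X
    have h1 : ((1 + X.map (phi ϖ r)) * h₀).map (⇑π)
        = π.mapMatrix (1 + X.map (phi ϖ r)) * π.mapMatrix h₀ := by
      rw [← _root_.map_mul]; rfl
    rw [h1, _root_.map_add, _root_.map_one, RingHom.mapMatrix_apply, RingHom.mapMatrix_apply,
      hMred, add_zero, one_mul, hh₀red]
  have symp : ∀ X : Matrix (Fin (2*n)) (Fin (2*n)) F, X ∈ spSet n F →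
      (1 + X.map (phi ϖ r)) * h₀ ∈ SpSet n R' := by
    intro X hX
    constructor
    · have := (det_one_add_map_phi ϖ r n hr X).mul hdeth₀
      rwa [← Matrix.det_mul] at this
    · have htr : ((1 + X.map (phi ϖ r)) * h₀)ᵀ = h₀ᵀ * (1 + (X.map (phi ϖ r))ᵀ) := by
        rw [transpose_mul, transpose_add, transpose_one]
      have hassoc : (1 + X.map (phi ϖ r)) * h₀ * Jmat R' n * (h₀ᵀ * (1 + (X.map (phi ϖ r))ᵀ))
          = (1 + X.map (phi ϖ r)) * (h₀ * Jmat R' n * h₀ᵀ) * (1 + (X.map (phi ϖ r))ᵀ) := by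
        noncomm_ring
      rw [htr, hassoc, hh₀.2, conj_identity ϖ r n hr X, hX, map_phi_zero, add_zero]
  refine (Nat.card_eq_of_bijective
    (fun X : ↥(spSet n F) =>
      (⟨(1 + X.1.map (phi ϖ r)) * h₀, symp X.1 X.2, main X.1⟩ :
        {h : Matrix (Fin (2*n)) (Fin (2*n)) R' // h ∈ SpSet n R' ∧ h.map ⇑π = g}))
    ⟨?_, ?_⟩).symm
  · -- injective
    intro X X' hXX
    have h1 : (1 + X.1.map (phi ϖ r)) * h₀ = (1 + X'.1.map (phi ϖ r)) * h₀ :=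
      congrArg Subtype.val hXX
    have hinv : h₀ * h₀⁻¹ = 1 := Matrix.mul_nonsing_inv h₀ hdeth₀
    have h2' : (1 + X.1.map (phi ϖ r)) = (1 + X'.1.map (phi ϖ r)) := by
      have := congrArg (fun Z => Z * h₀⁻¹) h1
      simpa [mul_assoc, hinv] using this
    have h3 : X.1.map (phi ϖ r) = X'.1.map (phi ϖ r) := by
      exact add_left_cancel h2'
    exact Subtype.ext (map_phi_injective ϖ r hϖ h3)
  · -- surjective
    rintro ⟨hmat, ⟨hdet, hsymp⟩, hred⟩
    have hinv : h₀⁻¹ * h₀ = 1 := Matrix.nonsing_inv_mul h₀ hdeth₀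
    set M₀ := (hmat - h₀) * h₀⁻¹ with hM₀
    have hM₀red : M₀.map ⇑π = 0 := by
      have h1 : M₀.map ⇑π = π.mapMatrix (hmat - h₀) * π.mapMatrix h₀⁻¹ := by
        rw [← _root_.map_mul]; rfl
      rw [h1, _root_.map_sub, RingHom.mapMatrix_apply, RingHom.mapMatrix_apply, hred, hh₀red,
        sub_self, zero_mul]
    obtain ⟨X, hX⟩ := exists_map_phi ϖ r hM₀red
    have hrecon : (1 + M₀) * h₀ = hmat := by
      rw [add_mul, one_mul, hM₀, mul_assoc, hinv, mul_one]
      abel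
    have hmem : X ∈ spSet n F := by
      have h1 : hmat * Jmat R' n * hmatᵀ = Jmat R' n := hsymp
      rw [← hrecon, ← hX] at h1
      have htr : ((1 + X.map (phi ϖ r)) * h₀)ᵀ = h₀ᵀ * (1 + (X.map (phi ϖ r))ᵀ) := by
        rw [transpose_mul, transpose_add, transpose_one]
      rw [htr] at h1
      have hassoc : (1 + X.map (phi ϖ r)) * h₀ * Jmat R' n * (h₀ᵀ * (1 + (X.map (phi ϖ r))ᵀ))
          = (1 + X.map (phi ϖ r)) * (h₀ * Jmat R' n * h₀ᵀ) * (1 + (X.map (phi ϖ r))ᵀ) := by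
        noncomm_ring
      rw [hassoc, hh₀.2, conj_identity ϖ r n hr X] at h1
      have h2' : (X * Jmat F n + Jmat F n * Xᵀ).map (phi ϖ r) = 0 := by
        have := congrArg (fun Z => Z - Jmat R' n) h1
        simpa using this
      have h3 : (X * Jmat F n + Jmat F n * Xᵀ).map (phi ϖ r)
          = (0 : Matrix (Fin (2*n)) (Fin (2*n)) F).map (phi ϖ r) := by
        rw [h2', map_phi_zero]
      exact map_phi_injective ϖ r hϖ h3
    exact ⟨⟨X, hmem⟩, Subtype.ext (by show (1 + X.map (phi ϖ r)) * h₀ = hmat; rw [hX]; exact hrecon)⟩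

end Fiber

section Fin1
variable {O : Type*} [CommRing O] [IsDomain O] [IsDiscreteValuationRing O] (ϖ : O)

lemma finite_quot [Finite (O ⧸ Ideal.span (Singleton.singleton ϖ))] (k : ℕ) :
    Finite (O ⧸ Ideal.span {ϖ^k}) := by
  classical
  induction k with
  | zero =>
    have : Subsingleton (O ⧸ Ideal.span {ϖ^0}) := by
      constructor
      intro a b
      obtain ⟨x, rfl⟩ := Ideal.Quotient.mk_surjective a
      obtain ⟨y, rfl⟩ := Ideal.Quotient.mk_surjective b
      rw [Ideal.Quotient.eq, Ideal.mem_span_singleton, pow_zero]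
      exact one_dvd _
    exact Finite.of_subsingleton
  | succ k ih =>
    haveI := ih
    set π := redmap ϖ k
    have hker : Finite {t : O ⧸ Ideal.span {ϖ^(k+1)} // π t = 0} := by
      have hchoose : ∀ t : {t : O ⧸ Ideal.span {ϖ^(k+1)} // π t = 0},
          ∃ x : O ⧸ Ideal.span (Singleton.singleton ϖ), phi ϖ k x = t.1 := fun t =>
        exists_phi_of_redmap_eq_zero ϖ k t.2
      apply Finite.of_injective (fun t => (hchoose t).choose)
      intro t t' h
      apply Subtype.ext
      rw [← (hchoose t).choose_spec, ← (hchoose t').choose_spec]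
      exact congrArg (phi ϖ k) h
    have hfib : ∀ b : O ⧸ Ideal.span {ϖ^k}, Finite {a // π a = b} := by
      intro b
      obtain ⟨a₀, ha₀⟩ := redmap_surjective ϖ k b
      apply Finite.of_injective (fun a : {a // π a = b} =>
        (⟨a.1 - a₀, by rw [map_sub, a.2, ha₀, sub_self]⟩ :
          {t : O ⧸ Ideal.span {ϖ^(k+1)} // π t = 0}))
      intro a a' h
      have h1 : a.1 - a₀ = a'.1 - a₀ := congrArg Subtype.val h
      have h2 : a.1 = a'.1 := by
        have := congrArg (· + a₀) h1
        simpa using this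
      exact Subtype.ext h2
    exact Finite.of_equiv _ (Equiv.sigmaFiberEquiv ⇑π)

end Fin1

lemma card_fibration {α β : Type*} [Finite α] [Finite β] (f : α → β) (S : Set α) (T : Set β)
    (c : ℕ) (hmap : ∀ a ∈ S, f a ∈ T)
    (hfib : ∀ b ∈ T, Nat.card {a : α // a ∈ S ∧ f a = b} = c) :
    Nat.card ↥S = Nat.card ↥T * c := by
  classical
  haveI : Fintype ↥T := Fintype.ofFinite _
  set G : ↥S → ↥T := fun a => ⟨f a.1, hmap a.1 a.2⟩ with hG
  have e2 : ∀ b : ↥T, {a : ↥S // G a = b} ≃ {a : α // a ∈ S ∧ f a = b.1} := fun b =>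
    { toFun := fun x => ⟨x.1.1, x.1.2, congrArg Subtype.val x.2⟩
      invFun := fun y => ⟨⟨y.1, y.2.1⟩, Subtype.ext y.2.2⟩
      left_inv := fun x => rfl
      right_inv := fun y => rfl }
  haveI : ∀ b : ↥T, Fintype {a : ↥S // G a = b} := fun b => Fintype.ofFinite _
  calc Nat.card ↥S = Nat.card (Σ b : ↥T, {a : ↥S // G a = b}) :=
        Nat.card_congr (Equiv.sigmaFiberEquiv G).symm
    _ = ∑ b : ↥T, Fintype.card {a : ↥S // G a = b} := by
        rw [Nat.card_eq_fintype_card, Fintype.card_sigma]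
    _ = ∑ _b : ↥T, c := Finset.sum_congr rfl (fun b _ => by
        rw [← Nat.card_eq_fintype_card, Nat.card_congr (e2 b)]; exact hfib b.1 b.2)
    _ = Nat.card ↥T * c := by
        rw [Finset.sum_const, Finset.card_univ, smul_eq_mul, Nat.card_eq_fintype_card]

section Main
variable {O : Type*} [CommRing O] [IsDomain O] [IsDiscreteValuationRing O] (ϖ : O)

lemma factor_factor {s t u : ℕ} (hst : s ≤ t) (htu : t ≤ u) (x : O ⧸ Ideal.span {ϖ^u}) :
    Ideal.Quotient.factor (pow_le_pow_span ϖ hst)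
      (Ideal.Quotient.factor (pow_le_pow_span ϖ htu) x)
    = Ideal.Quotient.factor (pow_le_pow_span ϖ (hst.trans htu)) x := by
  obtain ⟨y, rfl⟩ := Ideal.Quotient.mk_surjective x
  rw [Ideal.Quotient.factor_mk, Ideal.Quotient.factor_mk, Ideal.Quotient.factor_mk]

lemma spset_map {R S : Type*} [CommRing R] [CommRing S] (f : R →+* S) {n : ℕ}
    {g : Matrix (Fin (2*n)) (Fin (2*n)) R} (hg : g ∈ SpSet n R) :
    g.map f ∈ SpSet n S := by
  constructor
  · rw [← RingHom.mapMatrix_apply, ← RingHom.map_det]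
    exact hg.1.map f
  · have h1 : g.map ⇑f * Jmat S n * (g.map ⇑f)ᵀ = (g * Jmat R n * gᵀ).map ⇑f := by
      rw [← Jmat_map f, ← Matrix.transpose_map, ← Matrix.map_mul, ← Matrix.map_mul]
    rw [h1, hg.2, Jmat_map]

lemma two_unit [Finite (O ⧸ Ideal.span (Singleton.singleton ϖ))] (hϖ : Irreducible ϖ)
    {q : ℕ} (hq : Nat.card (O ⧸ Ideal.span {ϖ}) = q) (hodd : Odd q) :
    IsUnit (2 : O ⧸ Ideal.span {ϖ}) := by
  classical
  haveI hmax : (Ideal.span {ϖ}).IsMaximal := PrincipalIdealRing.isMaximal_of_irreducible hϖ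
  haveI : (Ideal.span {ϖ}).IsPrime := hmax.isPrime
  haveI : IsDomain (O ⧸ Ideal.span {ϖ}) := Ideal.Quotient.isDomain _
  haveI : Fintype (O ⧸ Ideal.span {ϖ}) := Fintype.ofFinite _
  have hne : (2 : O ⧸ Ideal.span {ϖ}) ≠ 0 := by
    intro h20
    have h21 : (2 : ℕ) • (1 : O ⧸ Ideal.span {ϖ}) = 0 := by
      rw [two_nsmul, one_add_one_eq_two, h20]
    have hord : addOrderOf (1 : O ⧸ Ideal.span {ϖ}) = 2 :=
      addOrderOf_eq_prime h21 one_ne_zero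
    have hdvd : (2 : ℕ) ∣ q := by
      rw [← hq, Nat.card_eq_fintype_card, ← hord]
      exact addOrderOf_dvd_card
    have hq1 := Nat.odd_iff.mp hodd
    omega
  have hinj : Function.Injective (fun x : O ⧸ Ideal.span {ϖ} => 2 * x) := by
    intro x y hxy
    exact mul_left_cancel₀ hne hxy
  obtain ⟨b, hb⟩ := (Finite.injective_iff_surjective.mp hinj) 1
  exact IsUnit.of_mul_eq_one b hb

lemma base_card {n : ℕ} (s : ℕ) :
    Nat.card ↥{g : Matrix (Fin (2*n)) (Fin (2*n)) (O ⧸ Ideal.span {ϖ^s}) |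
      g ∈ SpSet n (O ⧸ Ideal.span {ϖ^s}) ∧
      g.map (Ideal.Quotient.factor (pow_le_pow_span ϖ (le_refl s))) = 1} = 1 := by
  have hid : ∀ x : O ⧸ Ideal.span {ϖ^s},
      Ideal.Quotient.factor (pow_le_pow_span ϖ (le_refl s)) x = x := by
    intro x
    obtain ⟨y, rfl⟩ := Ideal.Quotient.mk_surjective x
    rw [Ideal.Quotient.factor_mk]
  have hone : (1 : Matrix (Fin (2*n)) (Fin (2*n)) (O ⧸ Ideal.span {ϖ^s}))
      ∈ SpSet n (O ⧸ Ideal.span {ϖ^s}) := by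
    refine ⟨by rw [Matrix.det_one]; exact isUnit_one, ?_⟩
    rw [Matrix.one_mul, Matrix.transpose_one, Matrix.mul_one]
  have hset : {g : Matrix (Fin (2*n)) (Fin (2*n)) (O ⧸ Ideal.span {ϖ^s}) |
      g ∈ SpSet n (O ⧸ Ideal.span {ϖ^s}) ∧
      g.map (Ideal.Quotient.factor (pow_le_pow_span ϖ (le_refl s))) = 1}
      = {(1 : Matrix (Fin (2*n)) (Fin (2*n)) (O ⧸ Ideal.span {ϖ^s}))} := by
    ext g
    simp only [Set.mem_setOf_eq, Set.mem_singleton_iff]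
    constructor
    · rintro ⟨-, h⟩
      ext i j
      have hh := congrFun (congrFun h i) j
      rw [map_apply, hid] at hh
      exact hh
    · rintro rfl
      exact ⟨hone, by ext i j; rw [map_apply, hid]⟩
  rw [hset, Nat.card_coe_set_eq, Set.ncard_singleton]

end Main

/-- The kernel of the reduction homomorphism `Sp_{2n}(O/ϖ^r O) → Sp_{2n}(O/ϖ^s O)`
has cardinality `q^{n(2n+1)(r−s)}`. -/
theorem stmt11 (n : ℕ) (hn : 1 ≤ n)
    (O : Type*) [CommRing O] [IsDomain O] [IsDiscreteValuationRing O]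
    (ϖ : O) (hϖ : Irreducible ϖ) [IsAdicComplete (Ideal.span {ϖ}) O]
    [Finite (O ⧸ Ideal.span {ϖ})] (q : ℕ)
    (hq : Nat.card (O ⧸ Ideal.span {ϖ}) = q) (hodd : Odd q)
    (r s : ℕ) (hs : 1 ≤ s) (hrs : s ≤ r) :
    Nat.card ↥{g : Matrix (Fin (2*n)) (Fin (2*n)) (O ⧸ Ideal.span {ϖ^r}) |
        g ∈ SpSet n (O ⧸ Ideal.span {ϖ^r}) ∧
        g.map (Ideal.Quotient.factor (Ideal.span_singleton_le_span_singleton.mpr (pow_dvd_pow ϖ hrs))) = 1}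
      = q^(n*(2*n+1)*(r-s)) := by
  classical
  have h2 : IsUnit (2 : O ⧸ Ideal.span {ϖ}) := two_unit ϖ hϖ hq hodd
  have key : ∀ k (hsk : s ≤ k),
      Nat.card ↥{g : Matrix (Fin (2*n)) (Fin (2*n)) (O ⧸ Ideal.span {ϖ^k}) |
        g ∈ SpSet n (O ⧸ Ideal.span {ϖ^k}) ∧
        g.map (Ideal.Quotient.factor (pow_le_pow_span ϖ hsk)) = 1}
      = q^(n*(2*n+1)*(k-s)) := by
    intro k hsk
    induction k, hsk using Nat.le_induction with
    | base =>
      rw [Nat.sub_self, Nat.mul_zero, pow_zero]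
      exact base_card ϖ s
    | succ k hk ih =>
      haveI hfinq1 : Finite (O ⧸ Ideal.span {ϖ^(k+1)}) := finite_quot ϖ (k+1)
      haveI hfinq2 : Finite (O ⧸ Ideal.span {ϖ^k}) := finite_quot ϖ k
      haveI : Finite (Matrix (Fin (2*n)) (Fin (2*n)) (O ⧸ Ideal.span {ϖ^(k+1)})) :=
        Finite.of_equiv _ Matrix.of
      haveI : Finite (Matrix (Fin (2*n)) (Fin (2*n)) (O ⧸ Ideal.span {ϖ^k})) :=
        Finite.of_equiv _ Matrix.of
      have hk1 : 1 ≤ k := le_trans hs hk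
      set S : Set (Matrix (Fin (2*n)) (Fin (2*n)) (O ⧸ Ideal.span {ϖ^(k+1)})) :=
        {g | g ∈ SpSet n (O ⧸ Ideal.span {ϖ^(k+1)}) ∧
          g.map (Ideal.Quotient.factor (pow_le_pow_span ϖ (hk.trans (Nat.le_succ k)))) = 1} with hS
      set T : Set (Matrix (Fin (2*n)) (Fin (2*n)) (O ⧸ Ideal.span {ϖ^k})) :=
        {g | g ∈ SpSet n (O ⧸ Ideal.span {ϖ^k}) ∧
          g.map (Ideal.Quotient.factor (pow_le_pow_span ϖ hk)) = 1} with hT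
      have hcompose : ∀ a : Matrix (Fin (2*n)) (Fin (2*n)) (O ⧸ Ideal.span {ϖ^(k+1)}),
          (a.map ⇑(redmap ϖ k)).map
              ⇑(Ideal.Quotient.factor (pow_le_pow_span ϖ hk))
            = a.map ⇑(Ideal.Quotient.factor (pow_le_pow_span ϖ (hk.trans (Nat.le_succ k)))) := by
        intro a
        rw [Matrix.map_map]
        ext i j
        exact factor_factor ϖ hk (Nat.le_succ k) (a i j)
      have hmap : ∀ a ∈ S, a.map ⇑(redmap ϖ k) ∈ T := by
        rintro a ⟨hsp, hker⟩
        exact ⟨spset_map (redmap ϖ k) hsp, by rw [hcompose a, hker]⟩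
      have hfib : ∀ b ∈ T, Nat.card {a : Matrix (Fin (2*n)) (Fin (2*n))
          (O ⧸ Ideal.span {ϖ^(k+1)}) // a ∈ S ∧ a.map ⇑(redmap ϖ k) = b}
          = q^(n*(2*n+1)) := by
        intro g hgT
        have e : {a : Matrix (Fin (2*n)) (Fin (2*n)) (O ⧸ Ideal.span {ϖ^(k+1)}) //
            a ∈ S ∧ a.map ⇑(redmap ϖ k) = g}
            ≃ {h : Matrix (Fin (2*n)) (Fin (2*n)) (O ⧸ Ideal.span {ϖ^(k+1)}) //
            h ∈ SpSet n (O ⧸ Ideal.span {ϖ^(k+1)}) ∧ h.map ⇑(redmap ϖ k) = g} := by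
          apply Equiv.subtypeEquivRight
          intro a
          constructor
          · rintro ⟨⟨hsp, -⟩, hred⟩; exact ⟨hsp, hred⟩
          · rintro ⟨hsp, hred⟩
            refine ⟨⟨hsp, ?_⟩, hred⟩
            rw [← hcompose a, hred]
            exact hgT.2
        rw [Nat.card_congr e, fiber_card ϖ k n hϖ hk1 h2 hgT.1, card_spSet, hq]
      have hstep := card_fibration (fun h => h.map ⇑(redmap ϖ k)) S T (q^(n*(2*n+1))) hmap hfib
      have harith2 : n*(2*n+1)*(k-s) + n*(2*n+1) = n*(2*n+1)*(k+1-s) := by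
        have h3 : k + 1 - s = (k - s) + 1 := by omega
        rw [h3]; ring
      rw [hstep, ih, ← pow_add, harith2]
  exact key r hrs
end
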